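/- Let F_{β,p} denote the unique distribution function satisfying the functional equation with parameters (β,p). Then 1 - F_{β,p}(1 - x) = F_{β,q}(x) for all real x. -/

import Mathlib

open Filter

/-- Any monotone solution of the functional equation tending to 0 at -∞ vanishes on (-∞,0]. -/
lemma stmt8_supp0 (β r : ℝ) (hβ0 : 0 < β) (hβ1 : β < 1) (hr0 : 0 ≤ r) (hr1 : r < 1)
    (F : ℝ → ℝ) (hmono : Monotone F)
    (hbot : Filter.Tendsto F Filter.atBot (nhds 0))
    (hF : ∀ x : ℝ, F x = r * F (x / β) + (1 - r) * F (x / β + 1 - 1 / β)) :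
    ∀ x ≤ 0, F x = 0 := by
  have hinvβ : 1 ≤ 1 / β := by
    rw [le_div_iff₀ hβ0]; linarith
  have hlow : ∀ x, 0 ≤ F x := by
    intro x
    refine le_of_tendsto hbot (Filter.eventually_atBot.2 ⟨x, fun y hy => hmono hy⟩)
  have hstep : ∀ x, F x ≤ F (x / β) := by
    intro x
    have h1 : x / β + 1 - 1 / β ≤ x / β := by linarith
    have h2 := hmono h1
    have h3 := hF x
    nlinarith
  have hiter : ∀ x : ℝ, ∀ n : ℕ, F x ≤ F (x / β ^ n) := by
    intro x n
    induction n with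
    | zero => simp
    | succ n ih =>
      have : x / β ^ n / β = x / β ^ (n + 1) := by
        rw [div_div, ← pow_succ]
      calc F x ≤ F (x / β ^ n) := ih
        _ ≤ F (x / β ^ n / β) := hstep _
        _ = F (x / β ^ (n + 1)) := by rw [this]
  have hnegzero : ∀ x < 0, F x = 0 := by
    intro x hx
    have hpow : Filter.Tendsto (fun n : ℕ => (β ^ n : ℝ)) Filter.atTop (nhds 0) :=
      tendsto_pow_atTop_nhds_zero_of_lt_one hβ0.le hβ1
    have hpow' : Filter.Tendsto (fun n : ℕ => (β ^ n : ℝ)) Filter.atTop (nhdsWithin 0 (Set.Ioi 0)) := by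
      refine tendsto_nhdsWithin_of_tendsto_nhds_of_eventually_within _ hpow
        (Filter.Eventually.of_forall fun n => pow_pos hβ0 n)
    have hinv : Filter.Tendsto (fun n : ℕ => (β ^ n : ℝ)⁻¹) Filter.atTop Filter.atTop :=
      hpow'.inv_tendsto_nhdsGT_zero
    have hdiv : Filter.Tendsto (fun n : ℕ => x / β ^ n) Filter.atTop Filter.atBot := by
      simp only [div_eq_mul_inv]
      exact hinv.const_mul_atTop_of_neg hx
    have hcomp : Filter.Tendsto (fun n : ℕ => F (x / β ^ n)) Filter.atTop (nhds 0) :=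
      hbot.comp hdiv
    have hle : F x ≤ 0 :=
      ge_of_tendsto hcomp (Filter.Eventually.of_forall fun n => hiter x n)
    linarith [hlow x]
  intro x hx
  rcases lt_or_eq_of_le hx with hlt | heq
  · exact hnegzero x hlt
  · subst heq
    have h0 := hF 0
    have hneg : (0:ℝ) / β + 1 - 1 / β < 0 := by
      have : 1 < 1 / β := by rw [lt_div_iff₀ hβ0]; linarith
      simp only [zero_div]
      linarith
    rw [hnegzero _ hneg] at h0
    have : (0:ℝ) / β = 0 := by simp
    rw [this] at h0
    nlinarith

/-- Any monotone solution of the functional equation tending to 1 at ∞ equals 1 on [1,∞). -/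
lemma stmt8_supp1 (β r : ℝ) (hβ0 : 0 < β) (hβ1 : β < 1) (hr0 : 0 < r) (hr1 : r ≤ 1)
    (F : ℝ → ℝ) (hmono : Monotone F)
    (htop : Filter.Tendsto F Filter.atTop (nhds 1))
    (hF : ∀ x : ℝ, F x = r * F (x / β) + (1 - r) * F (x / β + 1 - 1 / β)) :
    ∀ x ≥ 1, F x = 1 := by
  have hβne : β ≠ 0 := ne_of_gt hβ0
  have hhigh : ∀ x, F x ≤ 1 := by
    intro x
    refine ge_of_tendsto htop (Filter.eventually_atTop.2 ⟨x, fun y hy => hmono hy⟩)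
  have hstep : ∀ x, F (x / β + 1 - 1 / β) ≤ F x := by
    intro x
    have h1 : x / β + 1 - 1 / β ≤ x / β := by
      have : 1 ≤ 1 / β := by rw [le_div_iff₀ hβ0]; linarith
      linarith
    have h2 := hmono h1
    have h3 := hF x
    nlinarith
  have hiter : ∀ x : ℝ, ∀ n : ℕ, F (1 + (x - 1) / β ^ n) ≤ F x := by
    intro x n
    induction n with
    | zero => simp
    | succ n ih =>
      have key : 1 + (x - 1) / β ^ (n + 1) = (1 + (x - 1) / β ^ n) / β + 1 - 1 / β := by
        field_simp
        ring
      rw [key]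
      exact le_trans (hstep _) ih
  have hgtone : ∀ x > 1, F x = 1 := by
    intro x hx
    have hpow : Filter.Tendsto (fun n : ℕ => (β ^ n : ℝ)) Filter.atTop (nhds 0) :=
      tendsto_pow_atTop_nhds_zero_of_lt_one hβ0.le hβ1
    have hpow' : Filter.Tendsto (fun n : ℕ => (β ^ n : ℝ)) Filter.atTop (nhdsWithin 0 (Set.Ioi 0)) :=
      tendsto_nhdsWithin_of_tendsto_nhds_of_eventually_within _ hpow
        (Filter.Eventually.of_forall fun n => pow_pos hβ0 n)
    have hinv : Filter.Tendsto (fun n : ℕ => (β ^ n : ℝ)⁻¹) Filter.atTop Filter.atTop :=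
      hpow'.inv_tendsto_nhdsGT_zero
    have hdiv : Filter.Tendsto (fun n : ℕ => 1 + (x - 1) / β ^ n) Filter.atTop Filter.atTop := by
      simp only [div_eq_mul_inv]
      exact tendsto_atTop_add_const_left _ 1 (hinv.const_mul_atTop (by linarith : (0:ℝ) < x - 1))
    have hcomp : Filter.Tendsto (fun n : ℕ => F (1 + (x - 1) / β ^ n)) Filter.atTop (nhds 1) :=
      htop.comp hdiv
    have hge : 1 ≤ F x :=
      le_of_tendsto hcomp (Filter.Eventually.of_forall fun n => hiter x n)
    linarith [hhigh x]
  intro x hx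
  rcases lt_or_eq_of_le hx with hlt | heq
  · exact hgtone x hlt
  · subst heq
    have h1 := hF 1
    have hbig : (1:ℝ) / β > 1 := by rw [gt_iff_lt, lt_div_iff₀ hβ0]; linarith
    have e1 : (1:ℝ) / β + 1 - 1 / β = 1 := by ring
    rw [hgtone _ hbig, e1] at h1
    nlinarith

theorem stmt8 (β p q : ℝ) (hβ0 : 0 < β) (hβ : β ≤ 1/2)
    (hp0 : 0 < p) (hp1 : p < 1) (hq : q = 1 - p)
    (hne : ¬(β = 1/2 ∧ p = 1/2))
    (Fp Fq : ℝ → ℝ)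
    (hFpmono : Monotone Fp)
    (hFprc : ∀ x : ℝ, ContinuousWithinAt Fp (Set.Ici x) x)
    (hFpbot : Filter.Tendsto Fp Filter.atBot (nhds 0))
    (hFptop : Filter.Tendsto Fp Filter.atTop (nhds 1))
    (hFp : ∀ x : ℝ, Fp x = p * Fp (x / β) + q * Fp (x / β + 1 - 1 / β))
    (hFqmono : Monotone Fq)
    (hFqrc : ∀ x : ℝ, ContinuousWithinAt Fq (Set.Ici x) x)
    (hFqbot : Filter.Tendsto Fq Filter.atBot (nhds 0))
    (hFqtop : Filter.Tendsto Fq Filter.atTop (nhds 1))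
    (hFq : ∀ x : ℝ, Fq x = q * Fq (x / β) + p * Fq (x / β + 1 - 1 / β)) :
    ∀ x : ℝ, 1 - Fp (1 - x) = Fq x := by
  have hβ1 : β < 1 := lt_of_le_of_lt hβ (by norm_num)
  have hβne : β ≠ 0 := ne_of_gt hβ0
  have hq0 : 0 < q := by rw [hq]; linarith
  have hq1 : q < 1 := by rw [hq]; linarith
  -- functional equations in the normalized form
  have hFp' : ∀ x : ℝ, Fp x = p * Fp (x / β) + (1 - p) * Fp (x / β + 1 - 1 / β) := by
    intro x; rw [hFp x, hq]
  have hFq' : ∀ x : ℝ, Fq x = q * Fq (x / β) + (1 - q) * Fq (x / β + 1 - 1 / β) := by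
    intro x; rw [hFq x]; rw [hq]; ring_nf
  have hFp0 := stmt8_supp0 β p hβ0 hβ1 hp0.le hp1 Fp hFpmono hFpbot hFp'
  have hFp1 := stmt8_supp1 β p hβ0 hβ1 hp0 hp1.le Fp hFpmono hFptop hFp'
  have hFq0 := stmt8_supp0 β q hβ0 hβ1 hq0.le hq1 Fq hFqmono hFqbot hFq'
  have hFq1 := stmt8_supp1 β q hβ0 hβ1 hq0 hq1.le Fq hFqmono hFqtop hFq'
  -- bounds
  have hFplow : ∀ x, 0 ≤ Fp x := fun x =>
    le_of_tendsto hFpbot (Filter.eventually_atBot.2 ⟨x, fun y hy => hFpmono hy⟩)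
  have hFphigh : ∀ x, Fp x ≤ 1 := fun x =>
    ge_of_tendsto hFptop (Filter.eventually_atTop.2 ⟨x, fun y hy => hFpmono hy⟩)
  have hFqlow : ∀ x, 0 ≤ Fq x := fun x =>
    le_of_tendsto hFqbot (Filter.eventually_atBot.2 ⟨x, fun y hy => hFqmono hy⟩)
  have hFqhigh : ∀ x, Fq x ≤ 1 := fun x =>
    ge_of_tendsto hFqtop (Filter.eventually_atTop.2 ⟨x, fun y hy => hFqmono hy⟩)
  set H : ℝ → ℝ := fun x => (1 - Fp (1 - x)) - Fq x with hH
  have Hle : ∀ y ≤ 0, H y = 0 := by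
    intro y hy
    have h1 : Fp (1 - y) = 1 := hFp1 _ (by linarith)
    have h2 : Fq y = 0 := hFq0 _ hy
    simp [hH, h1, h2]
  have Hge : ∀ y ≥ 1, H y = 0 := by
    intro y hy
    have h1 : Fp (1 - y) = 0 := hFp0 _ (by linarith)
    have h2 : Fq y = 1 := hFq1 _ hy
    simp [hH, h1, h2]
  have Heq : ∀ x : ℝ, H x = q * H (x / β) + p * H (x / β + 1 - 1 / β) := by
    intro x
    have e1 : (1:ℝ) - x / β = (1 - x) / β + 1 - 1 / β := by field_simp; ring
    have e2 : (1:ℝ) - (x / β + 1 - 1 / β) = (1 - x) / β := by field_simp; ring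
    simp only [hH]
    rw [e1, e2, hFp (1 - x), hFq x, hq]
    ring
  have disj : ∀ x : ℝ, 1 ≤ x / β ∨ x / β + 1 - 1 / β ≤ 0 := by
    intro x
    by_cases hx : β ≤ x
    · left; rw [le_div_iff₀ hβ0]; linarith
    · right
      push_neg at hx
      have e : x / β + 1 - 1 / β = (x - (1 - β)) / β := by field_simp; ring
      rw [e]
      apply div_nonpos_of_nonpos_of_nonneg _ hβ0.le
      linarith
  have Habs : ∀ x, |H x| ≤ 1 := by
    intro x
    rw [abs_le]
    constructor
    · simp only [hH]; linarith [hFphigh (1 - x), hFqhigh x]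
    · simp only [hH]; linarith [hFplow (1 - x), hFqlow x]
  have bdd : BddAbove (Set.range fun x => |H x|) := by
    refine ⟨1, ?_⟩
    rintro _ ⟨x, rfl⟩
    exact Habs x
  set D : ℝ := sSup (Set.range fun x => |H x|) with hD
  have hD0 : 0 ≤ D := by
    have h1 : |H 0| ≤ D := le_csSup bdd ⟨0, rfl⟩
    linarith [abs_nonneg (H 0)]
  have key : ∀ x, |H x| ≤ max p q * D := by
    intro x
    have hmaxD0 : 0 ≤ max p q := le_trans hp0.le (le_max_left _ _)
    rcases disj x with h | h
    · have hz : H (x / β) = 0 := Hge _ h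
      rw [Heq x, hz, mul_zero, zero_add, abs_mul, abs_of_pos hp0]
      calc p * |H (x / β + 1 - 1 / β)| ≤ p * D := by
            apply mul_le_mul_of_nonneg_left (le_csSup bdd ⟨_, rfl⟩) hp0.le
        _ ≤ max p q * D := mul_le_mul_of_nonneg_right (le_max_left _ _) hD0
    · have hz : H (x / β + 1 - 1 / β) = 0 := Hle _ h
      rw [Heq x, hz, mul_zero, add_zero, abs_mul, abs_of_pos hq0]
      calc q * |H (x / β)| ≤ q * D := by
            apply mul_le_mul_of_nonneg_left (le_csSup bdd ⟨_, rfl⟩) hq0.le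
        _ ≤ max p q * D := mul_le_mul_of_nonneg_right (le_max_right _ _) hD0
  have hDle : D ≤ max p q * D := by
    rw [hD]
    apply csSup_le (Set.range_nonempty _)
    rintro _ ⟨x, rfl⟩
    exact key x
  have hmax1 : max p q < 1 := max_lt hp1 hq1
  have hDzero : D = 0 := by nlinarith
  intro x
  have h1 : |H x| ≤ D := le_csSup bdd ⟨x, rfl⟩
  rw [hDzero] at h1
  have h2 : H x = 0 := abs_eq_zero.mp (le_antisymm h1 (abs_nonneg _))
  simp only [hH] at h2
  linarith
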